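/- Let m ≥ 1 and k ≥ 1 be integers with gcd(k, τ(m)) = 1, where τ(m) is the number of divisors of m. Then σ(m) divides σ_k(m). -/

import Mathlib

open Finset

private lemma pow_mod_eq' {R : Type*} [Monoid R] (x : R) {n : ℕ} (hx : x ^ n = 1) (m : ℕ) :
    x ^ m = x ^ (m % n) := by
  conv_lhs => rw [← Nat.mod_add_div m n]
  rw [pow_add, pow_mul, hx, one_pow, mul_one]

private lemma sum_pow_mod_perm (p k n : ℕ) (hn : 0 < n) (hco : Nat.Coprime k n) {R : Type*}
    [Monoid R] [AddCommMonoid R] (x : R) :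
    ∑ i ∈ range n, x ^ (i * k % n) = ∑ i ∈ range n, x ^ i := by
  rcases eq_or_lt_of_le (show 1 ≤ n from hn) with h1 | h1
  · simp [← h1]
  · obtain ⟨k', -, hk'⟩ := Nat.exists_mul_mod_eq_one_of_coprime hco h1
    refine Finset.sum_nbij' (fun i => i * k % n) (fun j => j * k' % n) ?_ ?_ ?_ ?_ ?_
    · intro a _; exact mem_range.mpr (Nat.mod_lt _ hn)
    · intro a _; exact mem_range.mpr (Nat.mod_lt _ hn)
    · intro a ha
      have halt := mem_range.mp ha
      rw [Nat.mod_mul_mod, mul_assoc, Nat.mul_mod, hk', mul_one]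
      simp [Nat.mod_eq_of_lt halt]
    · intro a ha
      have halt := mem_range.mp ha
      rw [Nat.mod_mul_mod, mul_assoc, Nat.mul_mod, mul_comm k' k, hk', mul_one]
      simp [Nat.mod_eq_of_lt halt]
    · intro a _; rfl

private lemma key_dvd {p : ℕ} (e k : ℕ) (hco : Nat.Coprime k (e + 1)) :
    (∑ i ∈ range (e + 1), p ^ i) ∣ ∑ i ∈ range (e + 1), p ^ (i * k) := by
  set n := e + 1 with hn
  set N := ∑ i ∈ range n, p ^ i with hN
  have hN0 : N ≠ 0 := by
    have : 1 ≤ N := by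
      rw [hN]
      calc 1 = p ^ 0 := rfl
      _ ≤ ∑ i ∈ range n, p ^ i := Finset.single_le_sum (f := fun i => p ^ i) (by intros; positivity) (by simp [hn])
    omega
  haveI : NeZero N := ⟨hN0⟩
  rw [← ZMod.natCast_eq_zero_iff _ N]
  push_cast
  have hcastN : (∑ i ∈ range n, (p : ZMod N) ^ i) = 0 := by
    have : ((N : ℕ) : ZMod N) = 0 := ZMod.natCast_self N
    rw [hN] at this; push_cast at this; exact this
  have h1 : (p : ZMod N) ^ n = 1 := by
    have hg := geom_sum_mul (p : ZMod N) n
    rw [hcastN, zero_mul] at hg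
    have := sub_eq_zero.mp hg.symm
    exact this
  calc ∑ i ∈ range n, (p : ZMod N) ^ (i * k)
      = ∑ i ∈ range n, (p : ZMod N) ^ (i * k % n) :=
        Finset.sum_congr rfl fun i _ => pow_mod_eq' _ h1 _
    _ = ∑ i ∈ range n, (p : ZMod N) ^ i := sum_pow_mod_perm p k n (by omega) hco _
    _ = 0 := hcastN

theorem sigma_dvd_sigma_k (m k : ℕ) (hm : 1 ≤ m) (hk : 1 ≤ k)
    (h : Nat.gcd k (ArithmeticFunction.sigma 0 m) = 1) :
    ArithmeticFunction.sigma 1 m ∣ ArithmeticFunction.sigma k m := by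
  have hm0 : m ≠ 0 := by omega
  rw [ArithmeticFunction.IsMultiplicative.multiplicative_factorization _
        ArithmeticFunction.isMultiplicative_sigma hm0,
      ArithmeticFunction.IsMultiplicative.multiplicative_factorization _
        ArithmeticFunction.isMultiplicative_sigma hm0]
  rw [Finsupp.prod, Finsupp.prod]
  apply Finset.prod_dvd_prod_of_dvd
  intro p hp
  have hpp : p.Prime := Nat.prime_of_mem_primeFactors (by
    rwa [Nat.support_factorization] at hp)
  set e := m.factorization p with he
  have hco : Nat.Coprime k (e + 1) := by
    have hdvd : (e + 1) ∣ ArithmeticFunction.sigma 0 m := by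
      rw [ArithmeticFunction.sigma_zero_apply, Nat.card_divisors hm0]
      exact Finset.dvd_prod_of_mem _ (by rwa [Nat.support_factorization] at hp)
    exact Nat.Coprime.coprime_dvd_right hdvd h
  rw [ArithmeticFunction.sigma_apply, ArithmeticFunction.sigma_apply,
      Nat.sum_divisors_prime_pow hpp, Nat.sum_divisors_prime_pow hpp]
  simp only [pow_one, ← pow_mul]
  exact key_dvd e k hco
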